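/- Let m ≥ 1 and let K_{3,m} be the complete bipartite graph with parts {1,2,3} and {4,…,m+3}. Let s_{ai} ∈ ℝ for a ∈ {1,2,3} and i ∈ {4,…,m+3}, and consider the K_{3,m}-partial matrix with all diagonal entries 1 and entries s_{ai} at the edges. This partial matrix has a positive definite completion if and only if there exist real numbers x, y, z such that for every i ∈ {4,…,m+3} the 4×4 matrix [[1, s_{1i}, s_{2i}, s_{3i}], [s_{1i}, 1, x, y], [s_{2i}, x, 1, z], [s_{3i}, y, z, 1]] is positive definite. -/

import Mathlib

/-!
The `K_{3,m}`-partial matrix (vertices `Fin 3 ⊕ Fin m`, edges exactly between the two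
parts, all diagonal entries `1`, edge entries `s a i`) has a positive definite
completion if and only if there exist real numbers `x, y, z` such that for every `i`
the `4×4` matrix
`[[1, s 0 i, s 1 i, s 2 i], [s 0 i, 1, x, y], [s 1 i, x, 1, z], [s 2 i, y, z, 1]]`
is positive definite (the tetrahedron-shaped-pillow criterion).
-/

open Matrix

lemma posDef_submatrix_inj {n m : Type*} [Fintype n] [Fintype m] [DecidableEq n] [DecidableEq m]
    {M : Matrix m m ℝ} (hM : M.PosDef) {f : n → m} (hf : Function.Injective f) :
    (M.submatrix f f).PosDef := by
  refine Matrix.PosDef.of_dotProduct_mulVec_pos ?_ ?_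
  · have h := hM.1
    unfold Matrix.IsHermitian at *
    rw [Matrix.conjTranspose_submatrix, h]
  · intro v hv
    set w : m → ℝ := fun k => ∑ j, if f j = k then v j else 0 with hw
    have inner : ∀ g : m → ℝ, ∑ k, w k * g k = ∑ j, v j * g (f j) := by
      intro g
      simp only [hw, Finset.sum_mul]
      rw [Finset.sum_comm]
      refine Finset.sum_congr rfl fun j _ => ?_
      simp [ite_mul, Finset.sum_ite_eq]
    have hwv : ∀ j, w (f j) = v j := by
      intro j
      simp [hw, hf.eq_iff, Finset.sum_ite_eq']
    have hwne : w ≠ 0 := by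
      obtain ⟨j, hj⟩ := Function.ne_iff.mp hv
      intro h
      exact hj (by rw [← hwv j, h]; rfl)
    have h2 : ∀ k, ∑ l, M k l * w l = ∑ j', M k (f j') * v j' := by
      intro k
      have := inner (fun l => M k l)
      simp only [mul_comm] at this ⊢
      exact this
    have key : star w ⬝ᵥ M *ᵥ w = star v ⬝ᵥ (M.submatrix f f) *ᵥ v := by
      simp only [star_trivial, dotProduct, Matrix.mulVec, Matrix.submatrix_apply]
      rw [inner]
      refine Finset.sum_congr rfl fun j _ => ?_
      rw [h2]
    rw [← key]
    exact hM.dotProduct_mulVec_pos hwne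

lemma posDef_of_posSemidef_det_ne_zero {n : Type*} [Fintype n] [DecidableEq n]
    {M : Matrix n n ℝ} (h : M.PosSemidef) (hd : M.det ≠ 0) : M.PosDef := by
  refine Matrix.PosDef.of_dotProduct_mulVec_pos h.1 fun v hv => ?_
  rcases (h.dotProduct_mulVec_nonneg v).lt_or_eq with h' | h'
  · exact h'
  · exfalso
    have h0 : M *ᵥ v = 0 := (h.dotProduct_mulVec_zero_iff v).mp h'.symm
    apply hv
    have := congrArg (fun u => M⁻¹ *ᵥ u) h0
    simpa [Matrix.mulVec_mulVec, Matrix.nonsing_inv_mul M (isUnit_iff_ne_zero.2 hd)] using this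

theorem K3m_completion_iff_pillows {m : ℕ} (hm : 1 ≤ m) (s : Fin 3 → Fin m → ℝ) :
    (∃ Sigma : Matrix (Fin 3 ⊕ Fin m) (Fin 3 ⊕ Fin m) ℝ, Sigma.PosDef ∧
      (∀ k : Fin 3 ⊕ Fin m, Sigma k k = 1) ∧
      (∀ (a : Fin 3) (i : Fin m), Sigma (Sum.inl a) (Sum.inr i) = s a i)) ↔
    (∃ x y z : ℝ, ∀ i : Fin m,
      (!![1, s 0 i, s 1 i, s 2 i;
          s 0 i, 1, x, y;
          s 1 i, x, 1, z;
          s 2 i, y, z, 1] : Matrix (Fin 4) (Fin 4) ℝ).PosDef) := by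
  constructor
  · rintro ⟨S, hS, hdiag, hs⟩
    have hsym : ∀ k l, S k l = S l k := fun k l => by
      rw [← hS.1.apply l k, star_trivial]
    refine ⟨S (Sum.inl 0) (Sum.inl 1), S (Sum.inl 0) (Sum.inl 2), S (Sum.inl 1) (Sum.inl 2),
      fun i => ?_⟩
    have hinj : Function.Injective
        (![Sum.inr i, Sum.inl 0, Sum.inl 1, Sum.inl 2] : Fin 4 → Fin 3 ⊕ Fin m) := by
      intro a b hab
      fin_cases a <;> fin_cases b <;> simp at hab ⊢
    have hmat : (!![1, s 0 i, s 1 i, s 2 i;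
          s 0 i, 1, S (Sum.inl 0) (Sum.inl 1), S (Sum.inl 0) (Sum.inl 2);
          s 1 i, S (Sum.inl 0) (Sum.inl 1), 1, S (Sum.inl 1) (Sum.inl 2);
          s 2 i, S (Sum.inl 0) (Sum.inl 2), S (Sum.inl 1) (Sum.inl 2), 1] :
          Matrix (Fin 4) (Fin 4) ℝ) = S.submatrix
            (![Sum.inr i, Sum.inl 0, Sum.inl 1, Sum.inl 2] : Fin 4 → Fin 3 ⊕ Fin m)
            (![Sum.inr i, Sum.inl 0, Sum.inl 1, Sum.inl 2] : Fin 4 → Fin 3 ⊕ Fin m) := by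
      ext a b
      fin_cases a <;> fin_cases b <;>
        simp <;>
        first
          | exact (hdiag _).symm
          | exact (hs _ _).symm
          | (rw [hsym]; exact (hs _ _).symm)
          | exact hsym _ _
    rw [hmat]
    exact posDef_submatrix_inj hS hinj
  · rintro ⟨x, y, z, hp⟩
    set A : Matrix (Fin 3) (Fin 3) ℝ := !![1,x,y; x,1,z; y,z,1] with hA
    set B : Matrix (Fin 3) (Fin m) ℝ := Matrix.of s with hB
    have i0 : Fin m := ⟨0, hm⟩
    have hApd : A.PosDef := by
      have h := posDef_submatrix_inj (hp i0) (Fin.succ_injective 3)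
      have hAe : A = (!![1, s 0 i0, s 1 i0, s 2 i0;
          s 0 i0, 1, x, y;
          s 1 i0, x, 1, z;
          s 2 i0, y, z, 1] : Matrix (Fin 4) (Fin 4) ℝ).submatrix Fin.succ Fin.succ := by
        ext a b
        fin_cases a <;> fin_cases b <;> simp [hA]
      rw [hAe]
      exact h
    haveI : Invertible A := A.invertibleOfIsUnitDet (isUnit_iff_ne_zero.2 hApd.det_pos.ne')
    set N : Matrix (Fin m) (Fin m) ℝ := Bᴴ * A⁻¹ * B with hN
    have hNd : ∀ i : Fin m, N i i < 1 := by
      intro i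
      set Bi : Matrix (Fin 1) (Fin 3) ℝ := Matrix.of fun _ a => s a i with hBi
      set P : Matrix (Fin 1 ⊕ Fin 3) (Fin 1 ⊕ Fin 3) ℝ :=
        Matrix.fromBlocks (!![(1:ℝ)]) Bi Biᴴ A with hP
      have hf : Function.Injective (Sum.elim (![0] : Fin 1 → Fin 4) ![1,2,3]) := by
        decide
      have hPe : P = (!![1, s 0 i, s 1 i, s 2 i;
          s 0 i, 1, x, y;
          s 1 i, x, 1, z;
          s 2 i, y, z, 1] : Matrix (Fin 4) (Fin 4) ℝ).submatrix
            (Sum.elim ![0] ![1,2,3]) (Sum.elim ![0] ![1,2,3]) := by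
        ext c d
        rcases c with c | c <;> rcases d with d | d <;>
          fin_cases c <;> fin_cases d <;>
          simp [hP, hBi, hA, Matrix.fromBlocks, Matrix.conjTranspose_apply]
      have hPpd : P.PosDef := by rw [hPe]; exact posDef_submatrix_inj (hp i) hf
      have hdet := Matrix.det_fromBlocks₂₂ (!![(1:ℝ)]) Bi Biᴴ A
      rw [← hP] at hdet
      have hpos : 0 < A.det * (!![(1:ℝ)] - Bi * ⅟A * Biᴴ).det := by
        rw [← hdet]; exact hPpd.det_pos
      have h1 : 0 < (!![(1:ℝ)] - Bi * ⅟A * Biᴴ).det := by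
        by_contra h
        push_neg at h
        nlinarith [hApd.det_pos]
      rw [Matrix.det_fin_one] at h1
      have hentry : (!![(1:ℝ)] - Bi * ⅟A * Biᴴ) 0 0 = 1 - N i i := by
        rw [invOf_eq_nonsing_inv]
        simp [hN, hBi, hB, Matrix.mul_apply, Matrix.sub_apply, Matrix.conjTranspose_apply]
      rw [hentry] at h1
      linarith
    set d : Fin m → ℝ := fun i => 1 - N i i with hdd
    have hdpos : ∀ i, 0 < d i := fun i => by
      have := hNd i; simp only [hdd]; linarith
    set D : Matrix (Fin m) (Fin m) ℝ := N + Matrix.diagonal d with hD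
    have hDsub : D - Bᴴ * A⁻¹ * B = Matrix.diagonal d := by
      rw [hD, ← hN, add_sub_cancel_left]
    have hdiagpd : (Matrix.diagonal d).PosDef := Matrix.PosDef.diagonal hdpos
    have hpsd : (Matrix.fromBlocks A B Bᴴ D).PosSemidef :=
      (Matrix.PosDef.fromBlocks₁₁ B D hApd).mpr (by rw [hDsub]; exact hdiagpd.posSemidef)
    have hdet : (Matrix.fromBlocks A B Bᴴ D).det = A.det * (Matrix.diagonal d).det := by
      rw [Matrix.det_fromBlocks₁₁, invOf_eq_nonsing_inv, hDsub]
    have hdetpos : 0 < (Matrix.fromBlocks A B Bᴴ D).det := by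
      rw [hdet, Matrix.det_diagonal]
      exact mul_pos hApd.det_pos (Finset.prod_pos fun i _ => hdpos i)
    refine ⟨Matrix.fromBlocks A B Bᴴ D, posDef_of_posSemidef_det_ne_zero hpsd hdetpos.ne', ?_, ?_⟩
    · rintro (a | i)
      · fin_cases a <;> simp [hA]
      · simp only [Matrix.fromBlocks_apply₂₂, hD, Matrix.add_apply,
          Matrix.diagonal_apply_eq, hdd]
        ring
    · intro a i
      simp [hB]
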